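/- The function W : (ℂ∖{0})² → ℂ defined by W(y_1, y_2) = 3y_1 + y_2 + 3·y_1^{−1} + y_1^{−1}y_2^{−1} + (1/2)·y_2^{−1} − (5/2)·y_1 y_2^{−1} + y_1^{2} y_2^{−1} has exactly 7 critical points, and each of these critical points is nondegenerate. -/

import Mathlib

/-- The potential function of the monotone fiber `L(4,4.5)` in `X̂₆` with the chosen bulk deformation (energy factor dropped). -/
noncomputable def W : ℂ → ℂ → ℂ := fun y₁ y₂ =>
  3 * y₁ + y₂ + 3 * y₁⁻¹ + y₁⁻¹ * y₂⁻¹ + (1 / 2) * y₂⁻¹ - (5 / 2) * y₁ * y₂⁻¹ + y₁ ^ 2 * y₂⁻¹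

/-- A point of `(ℂ∖{0})²` is a critical point of `W` if both partial
derivatives of `W` vanish there. -/
def IsCritPt (p : ℂ × ℂ) : Prop :=
  p.1 ≠ 0 ∧ p.2 ≠ 0 ∧
    deriv (fun z => W z p.2) p.1 = 0 ∧ deriv (fun z => W p.1 z) p.2 = 0

/-- The Hessian determinant
`(∂²W/∂y₁²)(∂²W/∂y₂²) - (∂²W/∂y₁∂y₂)²` of `W` at a point. -/
noncomputable def hessDet (p : ℂ × ℂ) : ℂ :=
  deriv (deriv (fun z => W z p.2)) p.1 * deriv (deriv (fun z => W p.1 z)) p.2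
    - (deriv (fun w => deriv (fun z => W z w) p.1) p.2) ^ 2

open Polynomial

/-! ### First derivatives -/

lemma hd1 (x y : ℂ) (hx : x ≠ 0) :
    HasDerivAt (fun z => W z y)
      (3 - 3 * x⁻¹^2 - x⁻¹^2 * y⁻¹ - (5/2) * y⁻¹ + 2 * x * y⁻¹) x := by
  have h1 := ((hasDerivAt_id x).const_mul (3:ℂ)).add_const y
  have h2 := h1.add ((hasDerivAt_inv hx).const_mul (3:ℂ))
  have h3 := h2.add ((hasDerivAt_inv hx).mul_const y⁻¹)
  have h4 := h3.add_const ((1/2 : ℂ) * y⁻¹)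
  have h5 := h4.sub (((hasDerivAt_id x).const_mul ((5:ℂ)/2)).mul_const y⁻¹)
  have h6 := h5.add ((hasDerivAt_pow 2 x).mul_const y⁻¹)
  refine h6.congr_deriv ?_
  simp only [← inv_pow]
  push_cast
  ring

lemma deriv1 (x y : ℂ) (hx : x ≠ 0) :
    deriv (fun z => W z y) x
      = 3 - 3 * x⁻¹^2 - x⁻¹^2 * y⁻¹ - (5/2) * y⁻¹ + 2 * x * y⁻¹ :=
  (hd1 x y hx).deriv

lemma hd2 (x y : ℂ) (hy : y ≠ 0) :
    HasDerivAt (fun z => W x z)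
      (1 - x⁻¹ * y⁻¹^2 - (1/2) * y⁻¹^2 + (5/2) * x * y⁻¹^2 - x^2 * y⁻¹^2) y := by
  have h1 := ((hasDerivAt_id y).const_add ((3:ℂ)*x)).add_const ((3:ℂ)*x⁻¹)
  have h2 := h1.add ((hasDerivAt_inv hy).const_mul x⁻¹)
  have h3 := h2.add ((hasDerivAt_inv hy).const_mul ((1:ℂ)/2))
  have h4 := h3.sub ((hasDerivAt_inv hy).const_mul ((5:ℂ)/2*x))
  have h5 := h4.add ((hasDerivAt_inv hy).const_mul (x^2))
  refine h5.congr_deriv ?_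
  simp only [← inv_pow]
  ring

lemma deriv2 (x y : ℂ) (hy : y ≠ 0) :
    deriv (fun z => W x z) y
      = 1 - x⁻¹ * y⁻¹^2 - (1/2) * y⁻¹^2 + (5/2) * x * y⁻¹^2 - x^2 * y⁻¹^2 :=
  (hd2 x y hy).deriv

/-! ### Second derivatives -/

lemma d11 (x y : ℂ) (hx : x ≠ 0) :
    deriv (deriv (fun z => W z y)) x
      = 6 * x⁻¹^3 + 2 * x⁻¹^3 * y⁻¹ + 2 * y⁻¹ := by
  have hev : deriv (fun z => W z y)
      =ᶠ[nhds x] fun z => 3 - 3 * z⁻¹^2 - z⁻¹^2 * y⁻¹ - (5/2) * y⁻¹ + 2 * z * y⁻¹ := by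
    filter_upwards [isOpen_ne.mem_nhds hx] with z hz
    exact deriv1 z y hz
  rw [hev.deriv_eq]
  have hi := (hasDerivAt_inv hx).pow 2
  have h1 := (hi.const_mul (3:ℂ)).const_sub 3
  have h2 := h1.sub (hi.mul_const y⁻¹)
  have h3 := h2.sub_const ((5/2 : ℂ) * y⁻¹)
  have h4 := h3.add (((hasDerivAt_id x).const_mul (2:ℂ)).mul_const y⁻¹)
  refine (h4.congr_deriv ?_).deriv
  simp only [← inv_pow]
  push_cast
  ring

lemma d22 (x y : ℂ) (hy : y ≠ 0) :
    deriv (deriv (fun z => W x z)) y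
      = 2 * x⁻¹ * y⁻¹^3 + y⁻¹^3 - 5 * x * y⁻¹^3 + 2 * x^2 * y⁻¹^3 := by
  have hev : deriv (fun z => W x z)
      =ᶠ[nhds y] fun z => 1 - x⁻¹ * z⁻¹^2 - (1/2) * z⁻¹^2 + (5/2) * x * z⁻¹^2 - x^2 * z⁻¹^2 := by
    filter_upwards [isOpen_ne.mem_nhds hy] with z hz
    exact deriv2 x z hz
  rw [hev.deriv_eq]
  have hi := (hasDerivAt_inv hy).pow 2
  have h1 := (hi.const_mul x⁻¹).const_sub 1
  have h2 := h1.sub (hi.const_mul ((1:ℂ)/2))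
  have h3 := h2.add (hi.const_mul ((5:ℂ)/2 * x))
  have h4 := h3.sub (hi.const_mul (x^2))
  refine (h4.congr_deriv ?_).deriv
  simp only [← inv_pow]
  push_cast
  ring

lemma d12 (x y : ℂ) (hx : x ≠ 0) (hy : y ≠ 0) :
    deriv (fun w => deriv (fun z => W z w) x) y
      = x⁻¹^2 * y⁻¹^2 + (5/2) * y⁻¹^2 - 2 * x * y⁻¹^2 := by
  have hfun : (fun w => deriv (fun z => W z w) x)
      = fun w => 3 - 3 * x⁻¹^2 - x⁻¹^2 * w⁻¹ - (5/2) * w⁻¹ + 2 * x * w⁻¹ := by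
    funext w; exact deriv1 x w hx
  rw [hfun]
  have hi := hasDerivAt_inv hy
  have h1 := (hi.const_mul (x⁻¹^2)).const_sub (3 - 3 * x⁻¹^2)
  have h2 := h1.sub (hi.const_mul ((5:ℂ)/2))
  have h3 := h2.add (hi.const_mul (2 * x))
  exact (h3.congr_deriv (by simp only [← inv_pow]; ring)).deriv

/-! ### Characterization of the critical points -/

lemma crit_iff (x y : ℂ) :
    IsCritPt (x, y) ↔
      (-40*x^7 + 100*x^6 + 158*x^5 - 464*x^4 + 40*x^3 + 324*x^2 - 28*x - 72 = 0) ∧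
      y = (-4*x^3 + 5*x^2 + 2) / (6*x^2 - 6) := by
  constructor
  · rintro ⟨hx', hy', h1', h2'⟩
    have hx : x ≠ 0 := hx'
    have hy : y ≠ 0 := hy'
    have h1 : deriv (fun z => W z y) x = 0 := h1'
    have h2 : deriv (fun z => W x z) y = 0 := h2'
    rw [deriv1 x y hx] at h1
    rw [deriv2 x y hy] at h2
    have ix : x * x⁻¹ = 1 := mul_inv_cancel₀ hx
    have iy : y * y⁻¹ = 1 := mul_inv_cancel₀ hy
    have e1 : (6*x^2 - 6) * y = -4*x^3 + 5*x^2 + 2 := by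
      linear_combination (2*x^2*y) * h1 + ((6:ℂ)*y + (2:ℂ)*y*y⁻¹ + (6:ℂ)*x*y*x⁻¹ + (2:ℂ)*x*y*x⁻¹*y⁻¹) * ix
        + ((2:ℂ) + (5:ℂ)*x^2 + (-4:ℂ)*x^3) * iy
    have e2 : 2*x*y^2 = 2*x^3 - 5*x^2 + x + 2 := by
      linear_combination (2*x*y^2) * h2 + ((2:ℂ)*y^2*y⁻¹^2) * ix
        + ((2:ℂ) + (2:ℂ)*y*y⁻¹ + (1:ℂ)*x + (1:ℂ)*x*y*y⁻¹ + (-5:ℂ)*x^2 + (-5:ℂ)*x^2*y*y⁻¹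
          + (2:ℂ)*x^3 + (2:ℂ)*x^3*y*y⁻¹) * iy
    have hD : (6*x^2 - 6 : ℂ) ≠ 0 := by
      intro h
      rcases mul_eq_zero.1 (show (x - 1) * (x + 1) = (0:ℂ) by linear_combination h/6) with h' | h'
      · rw [sub_eq_zero] at h'
        rw [h'] at e1; norm_num at e1
      · have h'' : x = -1 := by linear_combination h'
        rw [h''] at e1; norm_num at e1
    constructor
    · linear_combination ((-4:ℂ)*x + (12:ℂ)*x*y + (-10:ℂ)*x^3 + (-12:ℂ)*x^3*y + (8:ℂ)*x^4) * e1
        + ((36:ℂ) + (-72:ℂ)*x^2 + (36:ℂ)*x^4) * e2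
    · rw [eq_div_iff hD]
      linear_combination e1
  · rintro ⟨hP, hyv⟩
    have hx : x ≠ 0 := by
      intro h; rw [h] at hP; norm_num at hP
    have hD : (6*x^2 - 6 : ℂ) ≠ 0 := by
      intro h
      rcases mul_eq_zero.1 (show (x - 1) * (x + 1) = (0:ℂ) by linear_combination h/6) with h' | h'
      · rw [sub_eq_zero] at h'
        rw [h'] at hP; norm_num at hP
      · have h'' : x = -1 := by linear_combination h'
        rw [h''] at hP; norm_num at hP
    have hN : (-4*x^3 + 5*x^2 + 2 : ℂ) ≠ 0 := by
      intro h
      have key : ((-105320)*x^6 + (57060)*x^5 + (693934)*x^4 + (-162624)*x^3 + (-1014148)*x^2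
          + (240356)*x + (729468)) * (-4*x^3 + 5*x^2 + 2) = (1603800 : ℂ) := by
        linear_combination (-((10532:ℂ)*x^2 + (7459:ℂ)*x + (-2012:ℂ))) * hP
      rw [h, mul_zero] at key
      norm_num at key
    have hy : y ≠ 0 := by
      rw [hyv]; exact div_ne_zero hN hD
    have ix : x * x⁻¹ = 1 := mul_inv_cancel₀ hx
    have iy : y * y⁻¹ = 1 := mul_inv_cancel₀ hy
    have e1 : (6*x^2 - 6) * y = -4*x^3 + 5*x^2 + 2 := by
      rw [hyv, mul_comm, div_mul_cancel₀ _ hD]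
    have e2' : (2*x*y^2 - (2*x^3 - 5*x^2 + x + 2)) * (6*x^2 - 6)^2 = 0 := by
      linear_combination (2*x*((6*x^2 - 6)*y + (-4*x^3 + 5*x^2 + 2))) * e1 + hP
    have e2 : 2*x*y^2 = 2*x^3 - 5*x^2 + x + 2 := by
      rcases mul_eq_zero.1 e2' with h | h
      · linear_combination h
      · exact absurd h (pow_ne_zero 2 hD)
    refine ⟨hx, hy, ?_, ?_⟩
    · rw [show deriv (fun z => W z (x, y).2) (x, y).1 = deriv (fun z => W z y) x from rfl,
        deriv1 x y hx]
      linear_combination ((1/2:ℂ)*x⁻¹^2*y⁻¹) * e1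
        + ((5/2:ℂ)*y⁻¹ + (-3:ℂ)*y*y⁻¹ + (-2:ℂ)*x*y⁻¹ + (5/2:ℂ)*x*x⁻¹*y⁻¹ + (-3:ℂ)*x*y*x⁻¹*y⁻¹
          + (-2:ℂ)*x^2*x⁻¹*y⁻¹) * ix
        + ((-3:ℂ) + (3:ℂ)*x⁻¹^2) * iy
    · rw [show deriv (fun z => W (x, y).1 z) (x, y).2 = deriv (fun z => W x z) y from rfl,
        deriv2 x y hy]
      linear_combination ((1/2:ℂ)*x⁻¹*y⁻¹^2) * e2
        + ((1/2:ℂ)*y⁻¹^2 + (-1:ℂ)*y^2*y⁻¹^2 + (-5/2:ℂ)*x*y⁻¹^2 + (1:ℂ)*x^2*y⁻¹^2) * ix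
        + ((-1:ℂ) + (-1:ℂ)*y*y⁻¹) * iy

/-! ### Counting the roots of the auxiliary polynomial -/

noncomputable def auxPoly : Polynomial ℂ :=
  -40*X^7 + 100*X^6 + 158*X^5 - 464*X^4 + 40*X^3 + 324*X^2 - 28*X - 72

lemma auxPoly_natDegree : auxPoly.natDegree = 7 := by
  unfold auxPoly; compute_degree!

lemma auxPoly_deriv : derivative auxPoly
    = -280*X^6 + 600*X^5 + 790*X^4 - 1856*X^3 + 120*X^2 + 648*X - 28 := by
  unfold auxPoly
  simp only [derivative_sub, derivative_add, derivative_neg, derivative_mul, derivative_X_pow,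
    derivative_ofNat, derivative_X, derivative_C, Polynomial.C_eq_natCast]
  push_cast
  ring

lemma auxPoly_sep : auxPoly.Separable := by
  have key : (-55039041226896440*X^5 + 166888355765868220*X^4 - 201818214622766790*X^3
        - 283991053155302593*X^2 + 1203846936733496384*X - 204288902757569158) * auxPoly
      + (7862720175270920*X^6 - 26649308029149360*X^5 + 22454856316508096*X^4
        + 74682313592130669*X^3 - 268302330897330212*X^2 + 87181219390079914*X
        + 128700562207595742) * derivative auxPoly = (11105185256732298600 : ℂ[X]) := by
    rw [auxPoly_deriv]; unfold auxPoly; ring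
  refine ⟨C (11105185256732298600:ℂ)⁻¹ * (-55039041226896440*X^5 + 166888355765868220*X^4
      - 201818214622766790*X^3 - 283991053155302593*X^2 + 1203846936733496384*X
      - 204288902757569158),
    C (11105185256732298600:ℂ)⁻¹ * (7862720175270920*X^6 - 26649308029149360*X^5
      + 22454856316508096*X^4 + 74682313592130669*X^3 - 268302330897330212*X^2
      + 87181219390079914*X + 128700562207595742), ?_⟩
  rw [mul_assoc, mul_assoc, ← mul_add, key,
    show (11105185256732298600 : ℂ[X]) = C (11105185256732298600 : ℂ) from by simp [map_ofNat],
    ← C_mul, inv_mul_cancel₀ (by norm_num), C_1]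

lemma auxPoly_aeval (t : ℂ) : aeval t auxPoly
    = -40*t^7 + 100*t^6 + 158*t^5 - 464*t^4 + 40*t^3 + 324*t^2 - 28*t - 72 := by
  simp [auxPoly]

lemma auxPoly_rootSet : auxPoly.rootSet ℂ
    = {t : ℂ | -40*t^7 + 100*t^6 + 158*t^5 - 464*t^4 + 40*t^3 + 324*t^2 - 28*t - 72 = 0} := by
  have hne : auxPoly ≠ 0 := fun h => by
    have := auxPoly_natDegree
    rw [h] at this
    simp at this
  ext t
  rw [Polynomial.mem_rootSet, auxPoly_aeval]
  exact ⟨fun h => h.2, fun h => ⟨hne, h⟩⟩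

lemma root_card :
    ({t : ℂ | -40*t^7 + 100*t^6 + 158*t^5 - 464*t^4 + 40*t^3 + 324*t^2 - 28*t - 72 = 0}).ncard
      = 7 := by
  rw [← auxPoly_rootSet]
  have h1 : Fintype.card (auxPoly.rootSet ℂ) = auxPoly.natDegree :=
    Polynomial.card_rootSet_eq_natDegree auxPoly_sep (IsAlgClosed.splits (auxPoly.map (algebraMap ℂ ℂ)))
  rw [Set.ncard_eq_toFinset_card', Set.toFinset_card, h1, auxPoly_natDegree]

/-! ### Main theorem -/

lemma crit_set_eq :
    {p : ℂ × ℂ | IsCritPt p}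
      = (fun t : ℂ => (t, (-4*t^3 + 5*t^2 + 2) / (6*t^2 - 6))) ''
        {t : ℂ | -40*t^7 + 100*t^6 + 158*t^5 - 464*t^4 + 40*t^3 + 324*t^2 - 28*t - 72 = 0} := by
  ext ⟨x, y⟩
  simp only [Set.mem_setOf_eq, Set.mem_image, crit_iff, Prod.mk.injEq]
  constructor
  · rintro ⟨hP, hyv⟩
    exact ⟨x, hP, rfl, hyv.symm⟩
  · rintro ⟨t, hP, rfl, rfl⟩
    exact ⟨hP, rfl⟩

/-- `W` has exactly 7 critical points in `(ℂ∖{0})²`, and each of them is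
nondegenerate (nonvanishing Hessian determinant). -/
theorem W_critical_points :
    {p : ℂ × ℂ | IsCritPt p}.ncard = 7 ∧
      ∀ p : ℂ × ℂ, IsCritPt p → hessDet p ≠ 0 := by

  constructor
  · rw [crit_set_eq, Set.ncard_image_of_injOn, root_card]
    intro a _ b _ h
    exact (Prod.ext_iff.1 h).1
  · rintro ⟨x, y⟩ hp
    rw [crit_iff] at hp
    obtain ⟨hP, hyv⟩ := hp
    have hx : x ≠ 0 := by
      intro h; rw [h] at hP; norm_num at hP
    have hD : (6*x^2 - 6 : ℂ) ≠ 0 := by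
      intro h
      rcases mul_eq_zero.1 (show (x - 1) * (x + 1) = (0:ℂ) by linear_combination h/6) with h' | h'
      · rw [sub_eq_zero] at h'
        rw [h'] at hP; norm_num at hP
      · have h'' : x = -1 := by linear_combination h'
        rw [h''] at hP; norm_num at hP
    have hN : (-4*x^3 + 5*x^2 + 2 : ℂ) ≠ 0 := by
      intro h
      have key : ((-105320)*x^6 + (57060)*x^5 + (693934)*x^4 + (-162624)*x^3 + (-1014148)*x^2
          + (240356)*x + (729468)) * (-4*x^3 + 5*x^2 + 2) = (1603800 : ℂ) := by
        linear_combination (-((10532:ℂ)*x^2 + (7459:ℂ)*x + (-2012:ℂ))) * hP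
      rw [h, mul_zero] at key
      norm_num at key
    have hy : y ≠ 0 := by
      rw [hyv]; exact div_ne_zero hN hD
    have ix : x * x⁻¹ = 1 := mul_inv_cancel₀ hx
    have iy : y * y⁻¹ = 1 := mul_inv_cancel₀ hy
    have e1 : (6*x^2 - 6) * y = -4*x^3 + 5*x^2 + 2 := by
      rw [hyv, mul_comm, div_mul_cancel₀ _ hD]
    -- the Hessian determinant in terms of `x`, `y`
    have hHd : hessDet (x, y)
        = ((-17*x^4 + 48*x^3 - 60*x^2 + 8*x + 12)
            + (48*x^3 - 120*x^2 + 24*x + 48) * y) * x⁻¹^4 * y⁻¹^4 / 4 := by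
      rw [show hessDet (x, y)
          = deriv (deriv (fun z => W z y)) x * deriv (deriv (fun z => W x z)) y
            - (deriv (fun w => deriv (fun z => W z w) x) y) ^ 2 from rfl,
        d11 x y hx, d22 x y hy, d12 x y hx hy]
      rw [eq_div_iff (by norm_num : (4:ℂ) ≠ 0)]
      linear_combination ((17:ℂ)*y⁻¹^4 + (48:ℂ)*x⁻¹*y⁻¹^3 + (-16:ℂ)*x⁻¹*y⁻¹^4 + (-120:ℂ)*x⁻¹^2*y⁻¹^3 + (20:ℂ)*x⁻¹^2*y⁻¹^4 + (-8:ℂ)*x⁻¹^3*y⁻¹^4 + (-48:ℂ)*y*x⁻¹*y⁻¹^4 + (120:ℂ)*y*x⁻¹^2*y⁻¹^4 + (-24:ℂ)*y*x⁻¹^3*y⁻¹^4 + (17:ℂ)*x*x⁻¹*y⁻¹^4 + (48:ℂ)*x*x⁻¹^2*y⁻¹^3 + (-32:ℂ)*x*x⁻¹^2*y⁻¹^4 + (60:ℂ)*x*x⁻¹^3*y⁻¹^4 + (-48:ℂ)*x*y*x⁻¹^2*y⁻¹^4 + (120:ℂ)*x*y*x⁻¹^3*y⁻¹^4 + (17:ℂ)*x^2*x⁻¹^2*y⁻¹^4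 + (-48:ℂ)*x^2*x⁻¹^3*y⁻¹^4 + (-48:ℂ)*x^2*y*x⁻¹^3*y⁻¹^4 + (17:ℂ)*x^3*x⁻¹^3*y⁻¹^4) * ix
        + ((-48:ℂ)*x⁻¹*y⁻¹^3 + (120:ℂ)*x⁻¹^2*y⁻¹^3 + (-24:ℂ)*x⁻¹^3*y⁻¹^3 + (-48:ℂ)*x⁻¹^4*y⁻¹^3) * iy
    have hHnum : ((-294:ℂ)*x^6 + 1008*x^5 - 954*x^4 - 216*x^3 + 432*x^2 + 24) ≠ 0 := by
      intro h
      have key : ((-2219109781555420:ℂ)*x^6 + 4160253623386190*x^5 + 10395513395944849*x^4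
          - 17117273717499950*x^3 - 4636599407932024*x^2 + 6528142639742346*x
          + 3483851579473014) * ((-294:ℂ)*x^6 + 1008*x^5 - 954*x^4 - 216*x^3 + 432*x^2 + 24)
          = (224347176903682800 : ℂ) := by
        linear_combination (-((16310456894432337:ℂ)*x^5 - 45723288391004238*x^4
          + 31475219894731251*x^3 + 9419803921019742*x^2 + 2936188883752320*x
          - 1954649152726812)) * hP
      rw [h, mul_zero] at key
      norm_num at key
    have hAB : ((-17*x^4 + 48*x^3 - 60*x^2 + 8*x + 12)
        + (48*x^3 - 120*x^2 + 24*x + 48) * y : ℂ) ≠ 0 := by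
      intro h
      apply hHnum
      have key : ((-17*x^4 + 48*x^3 - 60*x^2 + 8*x + 12)
          + (48*x^3 - 120*x^2 + 24*x + 48) * y) * (6*x^2 - 6)
          = (-294:ℂ)*x^6 + 1008*x^5 - 954*x^4 - 216*x^3 + 432*x^2 + 24 := by
        linear_combination ((48:ℂ)*x^3 - 120*x^2 + 24*x + 48) * e1
      rw [h, zero_mul] at key
      exact key.symm
    rw [hHd]
    exact div_ne_zero (mul_ne_zero (mul_ne_zero hAB (pow_ne_zero 4 (inv_ne_zero hx)))
      (pow_ne_zero 4 (inv_ne_zero hy))) (by norm_num)
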